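/- Let X and Σ be finite sets, and let M be a symmetric bistochastic X × X matrix (M(x,y) = M(y,x) ≥ 0 with every row summing to 1) whose second largest eigenvalue λ = λ(M) satisfies λ < 1, with (unique) stationary distribution μ = μ(M). If a function f : X → Σ satisfies Pr_{(x,y) ~ M}[f(x) ≠ f(y)] ≤ ε, where (x,y) ~ M means x is drawn from μ and then y is drawn with probability M(x,y), then there exists σ ∈ Σ such that Pr_{x ~ μ}[f(x) ≠ σ] ≤ ε/(1 − λ). -/

import Mathlib

open Finset

attribute [local instance 10] Classical.propDecidable

/-- **Agreement lemma for Markov chains.** `M` is a symmetric bistochastic matrix on the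
finite set `X`, whose stationary distribution is uniform.  The hypothesis `hgap` states,
via the variational (Courant–Fischer) characterization, that the second largest
eigenvalue of `M` is at most `lam`: for every `g` orthogonal to the constants,
`E_{(x,y) ~ M}[g(x)g(y)] ≤ lam · E[g²]` (both sides normalized by `|X|`). -/
theorem agreement_lemma_markov
    {X Γ : Type*} [Fintype X] [Nonempty X] [Fintype Γ]
    (M : X → X → ℝ)
    (hsymm : ∀ x y, M x y = M y x)
    (hnn : ∀ x y, 0 ≤ M x y)
    (hrow : ∀ x, ∑ y, M x y = 1)
    (lam : ℝ) (hlam : lam < 1)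
    (hgap : ∀ g : X → ℝ, (∑ x, g x = 0) →
      ∑ x, ∑ y, M x y * g x * g y ≤ lam * ∑ x, (g x) ^ 2)
    (f : X → Γ) (ε : ℝ)
    (hf : ∑ x, ∑ y, ((Fintype.card X : ℝ))⁻¹ * M x y * (if f x ≠ f y then 1 else 0) ≤ ε) :
    ∃ σ : Γ, ∑ x, ((Fintype.card X : ℝ))⁻¹ * (if f x ≠ σ then 1 else 0) ≤ ε / (1 - lam) := by
  classical
  set N : ℝ := (Fintype.card X : ℝ) with hNdef
  have hN0 : (0:ℝ) < N := by
    rw [hNdef]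
    exact_mod_cast Fintype.card_pos
  have hl1 : (0:ℝ) < 1 - lam := by linarith
  set i : Γ → X → ℝ := fun σ x => if f x = σ then 1 else 0 with hidef
  set c : Γ → ℝ := fun σ => ∑ x, i σ x with hcdef
  have hc_nonneg : ∀ σ, 0 ≤ c σ := fun σ =>
    Finset.sum_nonneg fun x _ => by by_cases h : f x = σ <;> simp [hidef, h]
  have hc_sum : ∑ σ, c σ = N := by
    rw [hcdef]; rw [Finset.sum_comm]; simp [hidef, hNdef]
  have hcol : ∀ y, ∑ x, M x y = 1 := by
    intro y
    calc ∑ x, M x y = ∑ x, M y x := Finset.sum_congr rfl fun x _ => hsymm x y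
      _ = 1 := hrow y
  have hMsum : ∑ x : X, ∑ y : X, M x y = N := by simp [hrow, hNdef]
  have hB : ∀ σ, ∑ x : X, ∑ y : X, M x y * i σ y = c σ := by
    intro σ
    rw [Finset.sum_comm]
    calc ∑ y : X, ∑ x : X, M x y * i σ y
        = ∑ y : X, (∑ x : X, M x y) * i σ y :=
          Finset.sum_congr rfl fun y _ => (Finset.sum_mul _ _ _).symm
      _ = ∑ y : X, i σ y := by simp [hcol]
      _ = c σ := rfl
  have hA : ∀ σ, ∑ x : X, ∑ y : X, M x y * i σ x = c σ := by
    intro σ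
    calc ∑ x : X, ∑ y : X, M x y * i σ x
        = ∑ x : X, (∑ y : X, M x y) * i σ x :=
          Finset.sum_congr rfl fun x _ => (Finset.sum_mul _ _ _).symm
      _ = ∑ x : X, i σ x := by simp [hrow]
      _ = c σ := rfl
  set T : Γ → ℝ := fun σ => ∑ x : X, ∑ y : X, M x y * i σ x * i σ y with hTdef
  -- per-σ spectral bound
  have hTbound : ∀ σ, T σ ≤ lam * (c σ - c σ ^ 2 / N) + c σ ^ 2 / N := by
    intro σ
    set q : ℝ := c σ / N with hqdef
    set g : X → ℝ := fun x => i σ x - q with hgdef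
    have hii : ∀ x, i σ x * i σ x = i σ x := by
      intro x; by_cases h : f x = σ <;> simp [hidef, h]
    have hg0 : ∑ x, g x = 0 := by
      rw [hgdef, Finset.sum_sub_distrib]
      simp only [Finset.sum_const, Finset.card_univ, nsmul_eq_mul]
      rw [hqdef]
      have : ∑ x, i σ x = c σ := rfl
      rw [this]
      field_simp
      rw [← hNdef]; ring
    have hvar : ∑ x, g x ^ 2 = c σ - c σ ^ 2 / N := by
      have hsq : ∀ x, g x ^ 2 = i σ x - 2 * q * i σ x + q ^ 2 := by
        intro x
        have h1 : g x ^ 2 = i σ x * i σ x - 2 * q * i σ x + q ^ 2 := by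
          simp only [hgdef]; ring
        rw [h1, hii x]
      simp_rw [hsq]
      rw [Finset.sum_add_distrib, Finset.sum_sub_distrib, ← Finset.mul_sum]
      simp only [Finset.sum_const, Finset.card_univ, nsmul_eq_mul]
      have : ∑ x, i σ x = c σ := rfl
      rw [this, hqdef]
      field_simp
      ring
    have hexp : ∑ x, ∑ y, M x y * g x * g y
        = T σ - q * c σ - q * c σ + q * q * N := by
      have hterm : ∀ x y, M x y * g x * g y
          = M x y * i σ x * i σ y - q * (M x y * i σ x) - q * (M x y * i σ y)
            + q * q * M x y := by
        intro x y; simp only [hgdef]; ring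
      simp_rw [hterm]
      simp only [Finset.sum_add_distrib, Finset.sum_sub_distrib, ← Finset.mul_sum]
      rw [hA σ, hB σ, hMsum]
    have hq1 : q * c σ = c σ ^ 2 / N := by rw [hqdef]; field_simp
    have hq2 : q * q * N = c σ ^ 2 / N := by rw [hqdef]; field_simp
    have := hgap g hg0
    rw [hexp, hvar, hq1, hq2] at this
    linarith
  -- sum over σ of T equals agreement mass
  set S : ℝ := ∑ x : X, ∑ y : X, M x y * (if f x ≠ f y then 1 else 0) with hSdef
  have hTsum : ∑ σ, T σ = N - S := by
    have h1 : ∑ σ, T σ = ∑ x : X, ∑ y : X, M x y * (if f x = f y then 1 else 0) := by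
      rw [hTdef]
      rw [Finset.sum_comm]
      refine Finset.sum_congr rfl fun x _ => ?_
      rw [Finset.sum_comm]
      refine Finset.sum_congr rfl fun y _ => ?_
      simp only [hidef]
      by_cases h : f x = f y
      · simp [h, mul_ite, ite_mul, Finset.sum_ite_eq']
      · simp [h, mul_ite, ite_mul, Finset.sum_ite_eq']
    rw [h1, hSdef, eq_sub_iff_add_eq, ← hMsum]
    rw [← Finset.sum_add_distrib]
    refine Finset.sum_congr rfl fun x _ => ?_
    rw [← Finset.sum_add_distrib]
    refine Finset.sum_congr rfl fun y _ => ?_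
    by_cases h : f x = f y <;> simp [h]
  have hS_le : S ≤ ε * N := by
    have h1 : ∑ x, ∑ y, (N⁻¹ : ℝ) * M x y * (if f x ≠ f y then 1 else 0) = N⁻¹ * S := by
      rw [hSdef, Finset.mul_sum]
      refine Finset.sum_congr rfl fun x _ => ?_
      rw [Finset.mul_sum]
      refine Finset.sum_congr rfl fun y _ => ?_
      ring
    rw [h1] at hf
    calc S = N * (N⁻¹ * S) := by field_simp
      _ ≤ N * ε := by exact mul_le_mul_of_nonneg_left hf hN0.le
      _ = ε * N := mul_comm _ _
  set K : ℝ := ∑ σ, c σ ^ 2 with hKdef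
  have hmain : N - S ≤ lam * (N - K / N) + K / N := by
    rw [← hTsum]
    calc ∑ σ, T σ ≤ ∑ σ, (lam * (c σ - c σ ^ 2 / N) + c σ ^ 2 / N) :=
          Finset.sum_le_sum fun σ _ => hTbound σ
      _ = lam * (N - K / N) + K / N := by
          simp only [Finset.sum_add_distrib, Finset.sum_sub_distrib, ← Finset.mul_sum,
            ← Finset.sum_div, hc_sum, hKdef]
  -- choose majority σ
  haveI : Nonempty Γ := ⟨f (Classical.arbitrary X)⟩
  obtain ⟨σ, -, hmax⟩ := Finset.exists_max_image (Finset.univ : Finset Γ) c ⟨Classical.arbitrary Γ, Finset.mem_univ _⟩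
  refine ⟨σ, ?_⟩
  have hK_le : K ≤ c σ * N := by
    calc K = ∑ τ, c τ ^ 2 := rfl
      _ ≤ ∑ τ, c σ * c τ := Finset.sum_le_sum fun τ _ => by
          have := hmax τ (Finset.mem_univ τ)
          nlinarith [hc_nonneg τ]
      _ = c σ * N := by rw [← Finset.mul_sum, hc_sum]
  have hLHS : ∑ x, (N⁻¹ : ℝ) * (if f x ≠ σ then 1 else 0) = (N - c σ) / N := by
    rw [← Finset.mul_sum]
    have : ∑ x, (if f x ≠ σ then (1:ℝ) else 0) = N - c σ := by
      have h2 : ∀ x, (if f x ≠ σ then (1:ℝ) else 0) = 1 - i σ x := by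
        intro x; by_cases h : f x = σ <;> simp [hidef, h]
      simp_rw [h2]
      rw [Finset.sum_sub_distrib]
      simp only [Finset.sum_const, Finset.card_univ, nsmul_eq_mul, mul_one]
      rfl
    rw [this]; field_simp
  rw [hLHS, div_le_div_iff₀ hN0 hl1]
  have hKN : K / N ≤ c σ := by
    rw [div_le_iff₀ hN0]; linarith
  nlinarith [hmain, hS_le, hl1, hN0]
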